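/- For a simple graph G on [n] without isolated vertices, the total number of minimal primes of the principal ideal generated by y = ∏_{{i,j} ∈ E(G), i<j} x̄_{ji} in R_G = S/P_G equals ∑_{i ∈ V(G)} 2^{deg(i)} − n. -/

import Mathlib

open MvPolynomial Finset
noncomputable section
variable {K : Type*} [Field K] {n : ℕ}
abbrev FF (K : Type*) [Field K] (n : ℕ) := FractionRing (MvPolynomial (Fin n × Fin n) K)
def XX (K : Type*) [Field K] (n : ℕ) (p : Fin n × Fin n) : FF K n :=
  algebraMap (MvPolynomial (Fin n × Fin n) K) (FF K n) (X p)
lemma XX_ne_zero (p : Fin n × Fin n) : XX K n p ≠ 0 := by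
  simp [XX, IsFractionRing.to_map_eq_zero_iff, X_ne_zero]
def Lmon (K : Type*) [Field K] (n : ℕ) (w : Fin n × Fin n → ℤ) : FF K n :=
  ∏ p, XX K n p ^ w p
lemma Lmon_ne_zero (w : Fin n × Fin n → ℤ) : Lmon K n w ≠ 0 :=
  Finset.prod_ne_zero_iff.2 fun p _ => zpow_ne_zero _ (XX_ne_zero p)
lemma Lmon_add (w w' : Fin n × Fin n → ℤ) :
    Lmon K n (w + w') = Lmon K n w * Lmon K n w' := by
  rw [Lmon, Lmon, Lmon, ← Finset.prod_mul_distrib]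
  exact Finset.prod_congr rfl fun p _ => zpow_add₀ (XX_ne_zero p) _ _
lemma Lmon_sum {ι : Type*} (s : Finset ι) (w : ι → Fin n × Fin n → ℤ) :
    Lmon K n (∑ i ∈ s, w i) = ∏ i ∈ s, Lmon K n (w i) := by
  classical
  induction s using Finset.cons_induction with
  | empty => simp [Lmon]
  | cons a s ha ih => rw [Finset.sum_cons, Finset.prod_cons, Lmon_add, ih]
lemma Lmon_nsmul (k : ℕ) (w : Fin n × Fin n → ℤ) :
    Lmon K n ((k : ℤ) • w) = Lmon K n w ^ k := by
  rw [Lmon, Lmon, ← Finset.prod_pow]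
  refine Finset.prod_congr rfl fun p _ => ?_
  rw [Pi.smul_apply, smul_eq_mul, mul_comm, zpow_mul, zpow_natCast]
lemma Lmon_natCast (k : Fin n × Fin n →₀ ℕ) :
    Lmon K n (fun p => (k p : ℤ)) =
      algebraMap (MvPolynomial (Fin n × Fin n) K) (FF K n) (monomial k 1) := by
  rw [monomial_eq, C_1, one_mul, Finsupp.prod_fintype _ _ (fun i => pow_zero _), map_prod]
  refine Finset.prod_congr rfl fun p _ => ?_
  rw [map_pow, ← zpow_natCast]
  rfl
/-- Linear independence of Laurent monomials. -/
lemma Lmon_indep {ι : Type*} (s : Finset ι) (w : ι → Fin n × Fin n → ℤ)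
    (hw : Set.InjOn w s) (c : ι → K)
    (h : ∑ i ∈ s, algebraMap K (FF K n) (c i) * Lmon K n (w i) = 0) :
    ∀ i ∈ s, c i = 0 := by
  classical
  set N : ℕ := s.sup fun i => Finset.univ.sup fun q => (-(w i q)).toNat with hN
  have hNb : ∀ i ∈ s, ∀ q, 0 ≤ w i q + N := by
    intro i hi q
    have h1 : (-(w i q)).toNat ≤ N :=
      le_trans (Finset.le_sup (f := fun q => (-(w i q)).toNat) (Finset.mem_univ q))
        (Finset.le_sup (f := fun i => Finset.univ.sup fun q => (-(w i q)).toNat) hi)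
    omega
  set k : ι → (Fin n × Fin n →₀ ℕ) := fun i =>
    Finsupp.equivFunOnFinite.symm fun q => (w i q + N).toNat with hk
  have hkval : ∀ i ∈ s, ∀ q, (k i q : ℤ) = w i q + N := by
    intro i hi q
    simp only [hk, Finsupp.coe_equivFunOnFinite_symm]
    exact Int.toNat_of_nonneg (hNb i hi q)
  have key : ∑ i ∈ s, (monomial (k i) (c i) : MvPolynomial (Fin n × Fin n) K) = 0 := by
    have h2 : (∑ i ∈ s, algebraMap K (FF K n) (c i) * Lmon K n (w i)) *
        Lmon K n (fun _ => (N : ℤ)) = 0 := by rw [h, zero_mul]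
    rw [Finset.sum_mul] at h2
    have h3 : ∀ i ∈ s, algebraMap K (FF K n) (c i) * Lmon K n (w i) *
        Lmon K n (fun _ => (N : ℤ)) =
        algebraMap (MvPolynomial (Fin n × Fin n) K) (FF K n) (monomial (k i) (c i)) := by
      intro i hi
      rw [mul_assoc, ← Lmon_add]
      have : (w i + fun _ => (N : ℤ)) = fun p => ((k i p : ℤ)) := by
        funext q; rw [hkval i hi q]; rfl
      rw [this, Lmon_natCast]
      rw [show (monomial (k i) (c i) : MvPolynomial (Fin n × Fin n) K) =
          C (c i) * monomial (k i) 1 by rw [C_mul_monomial, mul_one], map_mul]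
      rfl
    rw [Finset.sum_congr rfl h3, ← map_sum] at h2
    exact (map_eq_zero_iff _ (IsFractionRing.injective _ _)).1 h2
  intro i hi
  have hki : Set.InjOn k s := by
    intro a ha b hb hab
    apply hw ha hb
    funext q
    have := hkval a ha q
    rw [hab, hkval b hb q] at this
    omega
  have h4 := congrArg (coeff (k i)) key
  rw [coeff_zero, coeff_sum] at h4
  rw [Finset.sum_eq_single i (fun j hj hne => by
    rw [coeff_monomial, if_neg (fun hkk => hne (hki hj hi hkk))]) (fun hin => absurd hi hin)]
    at h4
  rwa [coeff_monomial, if_pos rfl] at h4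

lemma pne_fst {α β : Type*} {a c : α} {b d : β} (h : a ≠ c) : (a, b) ≠ (c, d) := by
  simp [Prod.ext_iff]; intro h'; exact absurd h' h

lemma pne_snd {α β : Type*} {a c : α} {b d : β} (h : b ≠ d) : (a, b) ≠ (c, d) := by
  simp [Prod.ext_iff]; intro _; exact h

section Graph
variable (G : SimpleGraph (Fin n)) [DecidableRel G.Adj]

def piv (p : Fin n × Fin n) : Prop := G.Adj p.1 p.2 ∧ p.1 < p.2

instance : DecidablePred (piv G) := fun _ => instDecidableAnd

def ind (r q : Fin n × Fin n) : ℤ := if q = r then 1 else 0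

lemma ind_self (r : Fin n × Fin n) : ind r r = 1 := if_pos rfl

lemma ind_ne {r q : Fin n × Fin n} (h : q ≠ r) : ind r q = 0 := if_neg h

/-- exponent vector of the image of the variable `p` under the monomial map. -/
def rr (p : Fin n × Fin n) : Fin n × Fin n → ℤ :=
  if piv G p then
    fun q => ind (p.1, p.1) q + ind (p.2, p.2) q - ind (p.2, p.1) q
  else ind p

lemma rr_apply_piv {p : Fin n × Fin n} (h : piv G p) (q : Fin n × Fin n) :
    rr G p q = ind (p.1, p.1) q + ind (p.2, p.2) q - ind (p.2, p.1) q := by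
  rw [rr, if_pos h]

lemma rr_apply_nonpiv {p : Fin n × Fin n} (h : ¬ piv G p) :
    rr G p = ind p := by rw [rr, if_neg h]

def red (u : Fin n × Fin n →₀ ℕ) : Fin n × Fin n → ℤ :=
  ∑ p : Fin n × Fin n, (u p : ℤ) • rr G p

lemma red_add (u v : Fin n × Fin n →₀ ℕ) : red G (u + v) = red G u + red G v := by
  rw [red, red, red, ← Finset.sum_add_distrib]
  refine Finset.sum_congr rfl fun p _ => ?_
  rw [Finsupp.add_apply]
  push_cast
  rw [add_smul]

lemma red_single (p : Fin n × Fin n) : red G (Finsupp.single p 1) = rr G p := by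
  rw [red, Finset.sum_eq_single p (fun q _ hq => by
    rw [Finsupp.single_apply, if_neg (Ne.symm hq)]; simp) (fun h => absurd (mem_univ p) h)]
  simp

/-- the basic relation: for a pivot `(a,b)`,
`rr (a,a) + rr (b,b) = rr (a,b) + rr (b,a)`. -/
lemma rr_rel {a b : Fin n} (hab : G.Adj a b) (hlt : a < b) :
    rr G (a, a) + rr G (b, b) = rr G (a, b) + rr G (b, a) := by
  have h1 : ¬ piv G (a, a) := fun h => lt_irrefl a h.2
  have h2 : ¬ piv G (b, b) := fun h => lt_irrefl b h.2
  have h3 : piv G (a, b) := ⟨hab, hlt⟩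
  have h4 : ¬ piv G (b, a) := fun h => absurd hlt (not_lt.2 h.2.le)
  funext q
  rw [Pi.add_apply, Pi.add_apply, rr_apply_nonpiv G h1, rr_apply_nonpiv G h2,
    rr_apply_nonpiv G h4, rr_apply_piv G h3]
  ring

lemma red_apply_pivot_rev (u : Fin n × Fin n →₀ ℕ) {a b : Fin n}
    (hab : G.Adj a b) (hlt : a < b) :
    red G u (b, a) = (u (b, a) : ℤ) - u (a, b) := by
  classical
  have hne0 : a ≠ b := ne_of_lt hlt
  have hne : (a, b) ≠ (b, a) := pne_fst hne0
  rw [red, Finset.sum_apply]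
  rw [← Finset.add_sum_erase _ _ (mem_univ (a, b)),
    ← Finset.add_sum_erase _ _ (Finset.mem_erase.2 ⟨Ne.symm hne, mem_univ (b, a)⟩)]
  have e1 : ((u (a, b) : ℤ) • rr G (a, b)) (b, a) = - u (a, b) := by
    rw [Pi.smul_apply, rr_apply_piv G ⟨hab, hlt⟩, ind_ne (pne_fst hne0.symm),
      ind_ne (pne_snd hne0), ind_self]
    simp
  have e2 : ((u (b, a) : ℤ) • rr G (b, a)) (b, a) = u (b, a) := by
    have h4 : ¬ piv G (b, a) := fun h => absurd hlt (not_lt.2 h.2.le)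
    rw [Pi.smul_apply, rr_apply_nonpiv G h4, ind_self]
    simp
  have e3 : ∀ p ∈ ((univ.erase (a, b)).erase (b, a)),
      ((u p : ℤ) • rr G p) (b, a) = 0 := by
    intro p hp
    obtain ⟨hp1, hp2⟩ := Finset.mem_erase.1 hp
    have hp3 := (Finset.mem_erase.1 hp2).1
    by_cases hpv : piv G p
    · have hne' : p.1 ≠ p.2 := ne_of_lt hpv.2
      rw [Pi.smul_apply, rr_apply_piv G hpv,
        ind_ne (fun h => hne0 ((Prod.ext_iff.1 h).2.trans (Prod.ext_iff.1 h).1.symm)),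
        ind_ne (fun h => hne0 ((Prod.ext_iff.1 h).2.trans (Prod.ext_iff.1 h).1.symm)),
        ind_ne (fun h => hp3 (Prod.ext_iff.2
          ⟨(Prod.ext_iff.1 h).2.symm, (Prod.ext_iff.1 h).1.symm⟩))]
      simp
    · rw [Pi.smul_apply, rr_apply_nonpiv G hpv, ind_ne (Ne.symm hp1)]
      simp
  rw [Finset.sum_eq_zero e3, e1, e2]
  ring

lemma rr_self_piv {q : Fin n × Fin n} (h : piv G q) : rr G q q = 0 := by
  have hne : q.1 ≠ q.2 := ne_of_lt h.2
  rw [rr_apply_piv G h, ind_ne (pne_snd (Ne.symm hne)), ind_ne (pne_fst hne),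
    ind_ne (fun hh => hne (Prod.ext_iff.1 hh).1)]
  ring

lemma red_sub_red_of_eq_on_piv (u v : Fin n × Fin n →₀ ℕ)
    (hpiv : ∀ p, piv G p → u p = v p) (q : Fin n × Fin n) :
    red G u q - red G v q = if piv G q then 0 else (u q : ℤ) - v q := by
  classical
  rw [red, red, Finset.sum_apply, Finset.sum_apply, ← Finset.sum_sub_distrib]
  rw [Finset.sum_eq_single q (fun p _ hpq => by
    by_cases hpv : piv G p
    · rw [hpiv p hpv]; ring
    · rw [Pi.smul_apply, Pi.smul_apply, rr_apply_nonpiv G hpv, ind_ne (Ne.symm hpq)]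
      simp) (fun h => absurd (mem_univ q) h)]
  by_cases hqv : piv G q
  · rw [if_pos hqv, Pi.smul_apply, Pi.smul_apply, rr_self_piv G hqv]
    simp
  · rw [if_neg hqv, Pi.smul_apply, Pi.smul_apply, rr_apply_nonpiv G hqv, ind_self]
    simp

end Graph

end

/-- The diagonal 2-minor `f_{ij} = x_{ii}x_{jj} - x_{ij}x_{ji}`. -/
noncomputable def diagMinor (K : Type*) [Field K] (n : ℕ) (i j : Fin n) :
    MvPolynomial (Fin n × Fin n) K :=
  X (i, i) * X (j, j) - X (i, j) * X (j, i)

/-- The ideal `P_G` generated by the diagonal 2-minors of the edges of `G`. -/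
noncomputable def diagIdeal (K : Type*) [Field K] (n : ℕ)
    (G : SimpleGraph (Fin n)) : Ideal (MvPolynomial (Fin n × Fin n) K) :=
  Ideal.span {f | ∃ i j : Fin n, G.Adj i j ∧ i < j ∧ f = diagMinor K n i j}

noncomputable section
variable {K : Type*} [Field K] {n : ℕ}
variable (G : SimpleGraph (Fin n)) [DecidableRel G.Adj]

lemma X_mul_X (p q : Fin n × Fin n) :
    (X p * X q : MvPolynomial (Fin n × Fin n) K) =
      monomial (Finsupp.single p 1 + Finsupp.single q 1) 1 := by
  rw [X, X, monomial_mul, one_mul]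

lemma move_step (K : Type*) [Field K] {u : Fin n × Fin n →₀ ℕ} {a b : Fin n}
    (hab : G.Adj a b) (hlt : a < b) (h1 : 0 < u (a, b)) (h2 : 0 < u (b, a)) :
    ∃ u' : Fin n × Fin n →₀ ℕ, red G u' = red G u ∧
      u' (a, b) = u (a, b) - 1 ∧ (∀ p, piv G p → p ≠ (a, b) → u' p = u p) ∧
      (monomial u 1 - monomial u' 1 : MvPolynomial (Fin n × Fin n) K) ∈ diagIdeal K n G := by
  classical
  have hne0 : a ≠ b := ne_of_lt hlt
  set w : Fin n × Fin n →₀ ℕ := u - Finsupp.single (a, b) 1 - Finsupp.single (b, a) 1 with hw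
  have huw : u = w + Finsupp.single (a, b) 1 + Finsupp.single (b, a) 1 := by
    ext p
    simp only [hw, Finsupp.add_apply, Finsupp.tsub_apply, Finsupp.single_apply]
    by_cases hpa : p = (a, b)
    · subst hpa
      rw [if_pos rfl, if_neg (by exact fun h => (pne_fst hne0) h.symm)]
      omega
    · by_cases hpb : p = (b, a)
      · subst hpb
        rw [if_neg (by exact fun h => (pne_fst hne0.symm) h.symm), if_pos rfl]
        omega
      · rw [if_neg (fun h => hpa h.symm), if_neg (fun h => hpb h.symm)]
        omega
  set u' : Fin n × Fin n →₀ ℕ := w + Finsupp.single (a, a) 1 + Finsupp.single (b, b) 1 with hu'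
  refine ⟨u', ?_, ?_, ?_, ?_⟩
  · rw [hu', red_add, red_add, red_single, red_single]
    conv_rhs => rw [huw]
    rw [red_add, red_add, red_single, red_single]
    have := rr_rel G hab hlt
    rw [add_assoc, add_assoc, ← rr_rel G hab hlt]
  · have e1 : ((b, a) : Fin n × Fin n) ≠ (a, b) := pne_fst hne0.symm
    have e2 : ((a, a) : Fin n × Fin n) ≠ (a, b) := pne_snd hne0
    have e3 : ((b, b) : Fin n × Fin n) ≠ (a, b) := pne_fst hne0.symm
    rw [hu', hw]
    simp only [Finsupp.add_apply, Finsupp.tsub_apply, Finsupp.single_apply]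
    rw [if_pos trivial, if_neg e1, if_neg e2, if_neg e3]
    omega
  · intro p hpv hpab
    have hpaa : p ≠ (a, a) := fun h => lt_irrefl a (h ▸ hpv).2
    have hpbb : p ≠ (b, b) := fun h => lt_irrefl b (h ▸ hpv).2
    have hpba : p ≠ (b, a) := fun h => absurd hlt (not_lt.2 (le_of_lt (h ▸ hpv).2))
    rw [hu', hw]
    simp only [Finsupp.add_apply, Finsupp.tsub_apply, Finsupp.single_apply]
    rw [if_neg (fun h => hpab h.symm), if_neg (fun h => hpba h.symm),
      if_neg (fun h => hpaa h.symm), if_neg (fun h => hpbb h.symm)]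
    omega
  · have key : (monomial u 1 - monomial u' 1 : MvPolynomial (Fin n × Fin n) K) =
        (monomial w 1) * (-(diagMinor K n a b)) := by
      rw [diagMinor, neg_sub, mul_sub, hu']
      conv_lhs => rw [huw]
      rw [X_mul_X, X_mul_X, monomial_mul, monomial_mul, one_mul, add_assoc, add_assoc]
    rw [key]
    exact Ideal.mul_mem_left _ _ (neg_mem (Ideal.subset_span ⟨a, b, hab, hlt, rfl⟩))

lemma move (K : Type*) [Field K] : ∀ (N : ℕ) (u v : Fin n × Fin n →₀ ℕ),
    (∑ p ∈ univ.filter (piv G), (u p + v p)) = N → red G u = red G v →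
    (monomial u 1 - monomial v 1 : MvPolynomial (Fin n × Fin n) K) ∈ diagIdeal K n G := by
  intro N
  induction N using Nat.strong_induction_on with
  | _ N IH =>
    intro u v hN hred
    classical
    by_cases hall : ∀ p ∈ univ.filter (piv G), u p = v p
    · have huv : u = v := by
        ext q
        have h0 : red G u q - red G v q = 0 := by rw [hred]; ring
        rw [red_sub_red_of_eq_on_piv G u v
          (fun p hp => hall p (Finset.mem_filter.2 ⟨mem_univ p, hp⟩)) q] at h0
        by_cases hq : piv G q
        · exact hall q (Finset.mem_filter.2 ⟨mem_univ q, hq⟩)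
        · rw [if_neg hq] at h0; omega
      rw [huv, sub_self]
      exact zero_mem _
    · push_neg at hall
      obtain ⟨p, hp, hne⟩ := hall
      obtain ⟨-, hpv⟩ := Finset.mem_filter.1 hp
      obtain ⟨a, b⟩ := p
      have hab : G.Adj a b := hpv.1
      have hlt : a < b := hpv.2
      rcases Nat.lt_or_ge (v (a, b)) (u (a, b)) with hcmp | hcmp
      · -- u (a,b) > v (a,b) ≥ 0
        have h1 : 0 < u (a, b) := by omega
        have h2 : 0 < u (b, a) := by
          have e1 := red_apply_pivot_rev G u hab hlt
          have e2 := red_apply_pivot_rev G v hab hlt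
          rw [hred, e2] at e1
          omega
        obtain ⟨u', hred', hval, hoth, hmem⟩ := move_step G K hab hlt h1 h2
        have hmeas : (∑ q ∈ univ.filter (piv G), (u' q + v q)) = N - 1 ∧ 1 ≤ N := by
          have hsplit : u (a, b) + v (a, b) +
              ∑ q ∈ (univ.filter (piv G)).erase (a, b), (u q + v q) =
              ∑ q ∈ univ.filter (piv G), (u q + v q) :=
            Finset.add_sum_erase _ (fun q => u q + v q) hp
          have hsplit' : u' (a, b) + v (a, b) +
              ∑ q ∈ (univ.filter (piv G)).erase (a, b), (u' q + v q) =
              ∑ q ∈ univ.filter (piv G), (u' q + v q) :=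
            Finset.add_sum_erase _ (fun q => u' q + v q) hp
          have hcongr : ∑ q ∈ (univ.filter (piv G)).erase (a, b), (u' q + v q) =
              ∑ q ∈ (univ.filter (piv G)).erase (a, b), (u q + v q) := by
            refine Finset.sum_congr rfl fun q hq => ?_
            obtain ⟨hq1, hq2⟩ := Finset.mem_erase.1 hq
            have hqv := (Finset.mem_filter.1 hq2).2
            rw [hoth q hqv hq1]
          omega
        have hfin : (monomial u' 1 - monomial v 1 : MvPolynomial (Fin n × Fin n) K) ∈
            diagIdeal K n G := by
          refine IH (N - 1) (by omega) u' v hmeas.1 (by rw [hred', hred])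
        have : (monomial u 1 - monomial v 1 : MvPolynomial (Fin n × Fin n) K) =
            (monomial u 1 - monomial u' 1) + (monomial u' 1 - monomial v 1) := by ring
        rw [this]
        exact add_mem hmem hfin
      · -- v (a,b) > u (a,b)
        have h1 : 0 < v (a, b) := by omega
        have h2 : 0 < v (b, a) := by
          have e1 := red_apply_pivot_rev G u hab hlt
          have e2 := red_apply_pivot_rev G v hab hlt
          rw [hred, e2] at e1
          omega
        obtain ⟨v', hred', hval, hoth, hmem⟩ := move_step G K hab hlt h1 h2
        have hmeas : (∑ q ∈ univ.filter (piv G), (u q + v' q)) = N - 1 ∧ 1 ≤ N := by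
          have hsplit : u (a, b) + v (a, b) +
              ∑ q ∈ (univ.filter (piv G)).erase (a, b), (u q + v q) =
              ∑ q ∈ univ.filter (piv G), (u q + v q) :=
            Finset.add_sum_erase _ (fun q => u q + v q) hp
          have hsplit' : u (a, b) + v' (a, b) +
              ∑ q ∈ (univ.filter (piv G)).erase (a, b), (u q + v' q) =
              ∑ q ∈ univ.filter (piv G), (u q + v' q) :=
            Finset.add_sum_erase _ (fun q => u q + v' q) hp
          have hcongr : ∑ q ∈ (univ.filter (piv G)).erase (a, b), (u q + v' q) =
              ∑ q ∈ (univ.filter (piv G)).erase (a, b), (u q + v q) := by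
            refine Finset.sum_congr rfl fun q hq => ?_
            obtain ⟨hq1, hq2⟩ := Finset.mem_erase.1 hq
            have hqv := (Finset.mem_filter.1 hq2).2
            rw [hoth q hqv hq1]
          omega
        have hfin : (monomial u 1 - monomial v' 1 : MvPolynomial (Fin n × Fin n) K) ∈
            diagIdeal K n G := by
          refine IH (N - 1) (by omega) u v' hmeas.1 (by rw [hred', hred])
        have : (monomial u 1 - monomial v 1 : MvPolynomial (Fin n × Fin n) K) =
            (monomial u 1 - monomial v' 1) - (monomial v 1 - monomial v' 1) := by ring
        rw [this]
        exact sub_mem hfin hmem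

def aK (K : Type*) [Field K] (n : ℕ) : K →+* FF K n :=
  (algebraMap (MvPolynomial (Fin n × Fin n) K) (FF K n)).comp C

def PhiHom (K : Type*) [Field K] : MvPolynomial (Fin n × Fin n) K →+* FF K n :=
  eval₂Hom (aK K n) (fun p => Lmon K n (rr G p))

lemma PhiHom_monomial (u : Fin n × Fin n →₀ ℕ) (c : K) :
    PhiHom G K (monomial u c) = aK K n c * Lmon K n (red G u) := by
  rw [PhiHom, eval₂Hom_monomial]
  congr 1
  rw [Finsupp.prod_fintype _ _ (fun p => pow_zero _)]
  have : ∀ p : Fin n × Fin n, Lmon K n (rr G p) ^ u p = Lmon K n ((u p : ℤ) • rr G p) :=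
    fun p => (Lmon_nsmul (u p) (rr G p)).symm
  rw [Finset.prod_congr rfl (fun p _ => this p), ← Lmon_sum, red]

lemma PhiHom_X (p : Fin n × Fin n) : PhiHom G K (X p) = Lmon K n (rr G p) :=
  eval₂Hom_X' _ _ _

lemma PhiHom_diagMinor {a b : Fin n} (hab : G.Adj a b) (hlt : a < b) :
    PhiHom G K (diagMinor K n a b) = 0 := by
  rw [diagMinor, map_sub, map_mul, map_mul, PhiHom_X, PhiHom_X, PhiHom_X, PhiHom_X,
    ← Lmon_add, ← Lmon_add, rr_rel G hab hlt, sub_self]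

lemma diagIdeal_le_ker : diagIdeal K n G ≤ RingHom.ker (PhiHom G K) := by
  rw [diagIdeal, Ideal.span_le]
  rintro f ⟨a, b, hab, hlt, rfl⟩
  exact PhiHom_diagMinor G hab hlt

lemma ker_le_diagIdeal : ∀ (N : ℕ) (f : MvPolynomial (Fin n × Fin n) K),
    f.support.card = N → PhiHom G K f = 0 → f ∈ diagIdeal K n G := by
  intro N
  induction N using Nat.strong_induction_on with
  | _ N IH =>
    intro f hcard hker
    classical
    by_cases hinj : Set.InjOn (red G) f.support
    · -- all coefficients vanish
      have hf0 : f = 0 := by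
        by_contra hf
        obtain ⟨u₀, hu₀⟩ := Finset.nonempty_iff_ne_empty.2
          (fun h => hf (support_eq_empty.1 h))
        have hsum : ∑ u ∈ f.support, aK K n (coeff u f) * Lmon K n (red G u) = 0 := by
          rw [← hker]
          conv_rhs => rw [← support_sum_monomial_coeff f]
          rw [map_sum]
          exact (Finset.sum_congr rfl fun u _ => PhiHom_monomial G u (coeff u f)).symm
        have := Lmon_indep f.support (red G) hinj (fun u => coeff u f) hsum u₀ hu₀
        exact (mem_support_iff.1 hu₀) this
      rw [hf0]; exact zero_mem _
    · rw [Set.InjOn] at hinj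
      push_neg at hinj
      obtain ⟨u₀, h₀, u₁, h₁, hred, hne⟩ := hinj
      rw [Finset.mem_coe] at h₀ h₁
      set c := coeff u₀ f with hc
      set g : MvPolynomial (Fin n × Fin n) K :=
        C c * (monomial u₀ 1 - monomial u₁ 1) with hg
      have hgker : PhiHom G K g = 0 := by
        rw [hg, map_mul, map_sub, PhiHom_monomial, PhiHom_monomial, hred, sub_self, mul_zero]
      have hgmem : g ∈ diagIdeal K n G :=
        Ideal.mul_mem_left _ _ (move G K _ u₀ u₁ rfl hred)
      set f' := f - g with hf'
      have hc0 : coeff u₀ f' = 0 := by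
        rw [hf', hg, coeff_sub, coeff_C_mul, coeff_sub, coeff_monomial, coeff_monomial,
          if_pos rfl, if_neg (fun h => hne h.symm)]
        ring
      have hsub : f'.support ⊆ f.support.erase u₀ := by
        intro u hu
        have hne0 : u ≠ u₀ := fun h => (mem_support_iff.1 hu) (h ▸ hc0)
        rw [Finset.mem_erase]
        by_cases h1 : u = u₁
        · exact ⟨hne0, h1 ▸ h₁⟩
        · have heq : coeff u f' = coeff u f := by
            rw [hf', hg, coeff_sub, coeff_C_mul, coeff_sub, coeff_monomial, coeff_monomial,
              if_neg (fun h => hne0 h.symm), if_neg (fun h => h1 h.symm)]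
            ring
          exact ⟨hne0, mem_support_iff.2 (heq ▸ mem_support_iff.1 hu)⟩
      have hlt' : f'.support.card < N := by
        have hle := Finset.card_le_card hsub
        have h2 := Finset.card_erase_of_mem h₀
        have h3 : 0 < N := hcard ▸ Finset.card_pos.2 ⟨u₀, h₀⟩
        omega
      have hf'mem := IH _ hlt' f' rfl (by rw [hf', map_sub, hker, hgker, sub_zero])
      have hfeq : f = f' + g := by rw [hf']; ring
      rw [hfeq]
      exact add_mem hf'mem hgmem

lemma ker_PhiHom : RingHom.ker (PhiHom G K) = diagIdeal K n G := by
  refine le_antisymm (fun f hf => ?_) (diagIdeal_le_ker G)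
  exact ker_le_diagIdeal G _ f rfl hf

def Gdel (i : Fin n) : SimpleGraph (Fin n) where
  Adj a b := G.Adj a b ∧ a ≠ i ∧ b ≠ i
  symm := ⟨fun a b ⟨h1, h2, h3⟩ => ⟨h1.symm, h3, h2⟩⟩
  loopless := ⟨fun a ⟨h1, _, _⟩ => G.loopless.irrefl a h1⟩

instance (i : Fin n) : DecidableRel (Gdel G i).Adj := fun _ _ => instDecidableAnd

def Vvar (i : Fin n) (A : Finset (Fin n)) (p : Fin n × Fin n) : Prop :=
  (p.1 = i ∧ p.2 = i) ∨ (p.1 = i ∧ p.2 ∈ A) ∨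
    (p.2 = i ∧ p.1 ∈ G.neighborFinset i ∧ p.1 ∉ A)

instance (i : Fin n) (A : Finset (Fin n)) : DecidablePred (Vvar G i A) := fun _ =>
  instDecidableOr

def PIA (K : Type*) [Field K] (i : Fin n) (A : Finset (Fin n)) :
    Ideal (MvPolynomial (Fin n × Fin n) K) :=
  Ideal.span ({f | ∃ p, Vvar G i A p ∧ f = X p} ∪
    {f | ∃ a b : Fin n, (Gdel G i).Adj a b ∧ a < b ∧ f = diagMinor K n a b})

def PhiP (K : Type*) [Field K] (i : Fin n) (A : Finset (Fin n)) :
    MvPolynomial (Fin n × Fin n) K →+* FF K n :=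
  eval₂Hom (aK K n) (fun p => if Vvar G i A p then 0 else Lmon K n (rr (Gdel G i) p))

def piSub (K : Type*) [Field K] (i : Fin n) (A : Finset (Fin n)) :
    MvPolynomial (Fin n × Fin n) K →+* MvPolynomial (Fin n × Fin n) K :=
  eval₂Hom C (fun p => if Vvar G i A p then 0 else X p)

lemma PhiP_eq_comp (i : Fin n) (A : Finset (Fin n)) :
    PhiP G K i A = (PhiHom (Gdel G i) K).comp (piSub G K i A) := by
  apply MvPolynomial.ringHom_ext
  · intro c
    rw [PhiP, RingHom.comp_apply, piSub, eval₂Hom_C, eval₂Hom_C, PhiHom, eval₂Hom_C]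
  · intro p
    rw [PhiP, RingHom.comp_apply, piSub, eval₂Hom_X', eval₂Hom_X']
    by_cases h : Vvar G i A p
    · rw [if_pos h, if_pos h, map_zero]
    · rw [if_neg h, if_neg h, PhiHom_X]

lemma sub_piSub_mem (i : Fin n) (A : Finset (Fin n))
    (f : MvPolynomial (Fin n × Fin n) K) :
    f - piSub G K i A f ∈ Ideal.span {f | ∃ p, Vvar G i A p ∧ f = X p} := by
  induction f using MvPolynomial.induction_on with
  | C c => rw [piSub, eval₂Hom_C, sub_self]; exact zero_mem _
  | add f g hf hg =>
    rw [map_add]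
    have : f + g - (piSub G K i A f + piSub G K i A g) =
        (f - piSub G K i A f) + (g - piSub G K i A g) := by ring
    rw [this]; exact add_mem hf hg
  | mul_X f p hf =>
    have hX : piSub G K i A (X p) = if Vvar G i A p then 0 else X p := by
      rw [piSub, eval₂Hom_X']
    rw [map_mul, hX]
    by_cases h : Vvar G i A p
    · rw [if_pos h, mul_zero, sub_zero]
      exact Ideal.mul_mem_left _ _ (Ideal.subset_span ⟨p, h, rfl⟩)
    · rw [if_neg h]
      have : f * X p - piSub G K i A f * X p = (f - piSub G K i A f) * X p := by ring
      rw [this]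
      exact Ideal.mul_mem_right _ _ hf

lemma piSub_diagMinor (i : Fin n) (A : Finset (Fin n)) {a b : Fin n}
    (ha : a ≠ i) (hb : b ≠ i) :
    piSub G K i A (diagMinor K n a b) = diagMinor K n a b := by
  have hv : ∀ c d : Fin n, c ≠ i → d ≠ i → ¬ Vvar G i A (c, d) := by
    rintro c d hc hd (⟨h1, _⟩ | ⟨h1, _⟩ | ⟨h1, _⟩)
    · exact hc h1
    · exact hc h1
    · exact hd h1
  have hX : ∀ p, ¬ Vvar G i A p → piSub G K i A (X p) = X p := by
    intro p hp
    rw [piSub, eval₂Hom_X', if_neg hp]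
  rw [diagMinor, map_sub, map_mul, map_mul, hX _ (hv a a ha ha), hX _ (hv b b hb hb),
    hX _ (hv a b ha hb), hX _ (hv b a hb ha)]

lemma ker_PhiP (i : Fin n) (A : Finset (Fin n)) :
    RingHom.ker (PhiP G K i A) = PIA G K i A := by
  refine le_antisymm ?_ ?_
  · intro f hf
    rw [RingHom.mem_ker, PhiP_eq_comp, RingHom.comp_apply] at hf
    have h1 : piSub G K i A f ∈ diagIdeal K n (Gdel G i) :=
      ker_le_diagIdeal (Gdel G i) _ _ rfl hf
    have h2 := sub_piSub_mem G i A f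
    have : f = (f - piSub G K i A f) + piSub G K i A f := by ring
    rw [this, PIA]
    refine add_mem (Ideal.span_mono Set.subset_union_left h2) ?_
    refine Ideal.span_mono Set.subset_union_right ?_
    rw [diagIdeal] at h1
    exact h1
  · rw [PIA, Ideal.span_le]
    rintro f (⟨p, hp, rfl⟩ | ⟨a, b, hab, hlt, rfl⟩)
    · rw [SetLike.mem_coe, RingHom.mem_ker, PhiP, eval₂Hom_X', if_pos hp]
    · rw [SetLike.mem_coe, RingHom.mem_ker, PhiP_eq_comp, RingHom.comp_apply,
        piSub_diagMinor G i A hab.2.1 hab.2.2]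
      exact PhiHom_diagMinor (Gdel G i) hab hlt

lemma PIA_isPrime (i : Fin n) (A : Finset (Fin n)) : (PIA G K i A).IsPrime := by
  rw [← ker_PhiP]
  exact RingHom.ker_isPrime _

lemma X_mem_PIA {i : Fin n} {A : Finset (Fin n)} {p : Fin n × Fin n}
    (h : Vvar G i A p) : X p ∈ PIA G K i A :=
  Ideal.subset_span (Set.mem_union_left _ ⟨p, h, rfl⟩)

lemma X_not_mem_PIA {i : Fin n} {A : Finset (Fin n)} {p : Fin n × Fin n}
    (h : ¬ Vvar G i A p) : (X p : MvPolynomial (Fin n × Fin n) K) ∉ PIA G K i A := by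
  rw [← ker_PhiP, RingHom.mem_ker, PhiP, eval₂Hom_X', if_neg h]
  exact Lmon_ne_zero _

def Yprod (K : Type*) [Field K] : MvPolynomial (Fin n × Fin n) K :=
  ∏ p ∈ univ.filter (piv G), X (p.2, p.1)

def QI (K : Type*) [Field K] : Ideal (MvPolynomial (Fin n × Fin n) K) :=
  diagIdeal K n G ⊔ Ideal.span {Yprod G K}

def goodA (i : Fin n) (A : Finset (Fin n)) : Prop :=
  ∃ k ∈ G.neighborFinset i, (k < i ∧ k ∈ A) ∨ (i < k ∧ k ∉ A)

lemma QI_le_PIA {i : Fin n} {A : Finset (Fin n)} (hA : A ⊆ G.neighborFinset i)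
    (hg : goodA G i A) : QI G K ≤ PIA G K i A := by
  rw [QI]
  refine sup_le ?_ ?_
  · rw [diagIdeal, Ideal.span_le]
    rintro f ⟨a, b, hab, hlt, rfl⟩
    by_cases ha : a = i
    · subst ha
      rw [SetLike.mem_coe, diagMinor]
      have h1 : (X (a, a) : MvPolynomial (Fin n × Fin n) K) ∈ PIA G K a A :=
        X_mem_PIA G (Or.inl ⟨rfl, rfl⟩)
      have hbmem : b ∈ G.neighborFinset a := (G.mem_neighborFinset a b).2 hab
      refine sub_mem (Ideal.mul_mem_right _ _ h1) ?_
      by_cases hbA : b ∈ A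
      · exact Ideal.mul_mem_right _ _ (X_mem_PIA G (Or.inr (Or.inl ⟨rfl, hbA⟩)))
      · exact Ideal.mul_mem_left _ _ (X_mem_PIA G (Or.inr (Or.inr ⟨rfl, hbmem, hbA⟩)))
    · by_cases hb : b = i
      · subst hb
        rw [SetLike.mem_coe, diagMinor]
        have h1 : (X (b, b) : MvPolynomial (Fin n × Fin n) K) ∈ PIA G K b A :=
          X_mem_PIA G (Or.inl ⟨rfl, rfl⟩)
        have hamem : a ∈ G.neighborFinset b := (G.mem_neighborFinset b a).2 hab.symm
        refine sub_mem (Ideal.mul_mem_left _ _ h1) ?_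
        by_cases haA : a ∈ A
        · exact Ideal.mul_mem_left _ _ (X_mem_PIA G (Or.inr (Or.inl ⟨rfl, haA⟩)))
        · exact Ideal.mul_mem_right _ _ (X_mem_PIA G (Or.inr (Or.inr ⟨rfl, hamem, haA⟩)))
      · exact Ideal.subset_span (Set.mem_union_right _ ⟨a, b, ⟨hab, ha, hb⟩, hlt, rfl⟩)
  · rw [Ideal.span_singleton_le_iff_mem]
    obtain ⟨k, hk, hcase⟩ := hg
    have hadj : G.Adj i k := (G.mem_neighborFinset i k).1 hk
    rcases hcase with ⟨hki, hkA⟩ | ⟨hik, hkA⟩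
    · have hmem : ((k, i) : Fin n × Fin n) ∈ univ.filter (piv G) :=
        Finset.mem_filter.2 ⟨mem_univ _, hadj.symm, hki⟩
      rw [Yprod, ← Finset.mul_prod_erase _ _ hmem]
      exact Ideal.mul_mem_right _ _ (X_mem_PIA G (Or.inr (Or.inl ⟨rfl, hkA⟩)))
    · have hmem : ((i, k) : Fin n × Fin n) ∈ univ.filter (piv G) :=
        Finset.mem_filter.2 ⟨mem_univ _, hadj, hik⟩
      rw [Yprod, ← Finset.mul_prod_erase _ _ hmem]
      exact Ideal.mul_mem_right _ _ (X_mem_PIA G (Or.inr (Or.inr ⟨rfl, hk, hkA⟩)))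

lemma exists_PIA_le {p : Ideal (MvPolynomial (Fin n × Fin n) K)} (hp : p.IsPrime)
    (hQ : QI G K ≤ p) :
    ∃ i A, A ⊆ G.neighborFinset i ∧ goodA G i A ∧ PIA G K i A ≤ p := by
  classical
  have hdiag : diagIdeal K n G ≤ p := le_trans le_sup_left hQ
  have hY : Yprod G K ∈ p := hQ (Ideal.mem_sup_right (Ideal.subset_span rfl))
  rw [Yprod] at hY
  rw [Ideal.IsPrime.prod_mem_iff] at hY
  obtain ⟨q, hqmem, hXq⟩ := hY
  obtain ⟨-, hadj, hlt⟩ := Finset.mem_filter.1 hqmem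
  obtain ⟨a, b⟩ := q
  -- X (b, a) ∈ p, G.Adj a b, a < b
  have hminor : diagMinor K n a b ∈ p :=
    hdiag (Ideal.subset_span ⟨a, b, hadj, hlt, rfl⟩)
  have hdiagmem : (X (a, a) * X (b, b) : MvPolynomial (Fin n × Fin n) K) ∈ p := by
    have : (X (a, a) * X (b, b) : MvPolynomial (Fin n × Fin n) K) =
        diagMinor K n a b + X (a, b) * X (b, a) := by rw [diagMinor]; ring
    rw [this]
    exact add_mem hminor (Ideal.mul_mem_left _ _ hXq)
  -- the uniform construction
  have main : ∀ v : Fin n, X (v, v) ∈ p →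
      ∀ A : Finset (Fin n), A = (G.neighborFinset v).filter
        (fun k => (k < v ∧ X (v, k) ∈ p) ∨ (v < k ∧ X (k, v) ∉ p)) →
      A ⊆ G.neighborFinset v ∧ PIA G K v A ≤ p := by
    intro v hvv A hAdef
    have hAsub : A ⊆ G.neighborFinset v := hAdef ▸ Finset.filter_subset _ _
    have c1 : ∀ k, G.Adj v k → (X (v, k) * X (k, v) : MvPolynomial (Fin n × Fin n) K) ∈ p := by
      intro k hvk
      rcases lt_or_gt_of_ne hvk.ne with h | h
      · have hm : diagMinor K n v k ∈ p := hdiag (Ideal.subset_span ⟨v, k, hvk, h, rfl⟩)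
        have : (X (v, k) * X (k, v) : MvPolynomial (Fin n × Fin n) K) =
            X (v, v) * X (k, k) - diagMinor K n v k := by rw [diagMinor]; ring
        rw [this]
        exact sub_mem (Ideal.mul_mem_right _ _ hvv) hm
      · have hm : diagMinor K n k v ∈ p := hdiag (Ideal.subset_span ⟨k, v, hvk.symm, h, rfl⟩)
        have : (X (v, k) * X (k, v) : MvPolynomial (Fin n × Fin n) K) =
            X (k, k) * X (v, v) - diagMinor K n k v := by rw [diagMinor]; ring
        rw [this]
        exact sub_mem (Ideal.mul_mem_left _ _ hvv) hm
    have c2 : ∀ k ∈ A, (X (v, k) : MvPolynomial (Fin n × Fin n) K) ∈ p := by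
      intro k hkA
      rw [hAdef, Finset.mem_filter] at hkA
      obtain ⟨hkN, h | h⟩ := hkA
      · exact h.2
      · rcases hp.mem_or_mem (c1 k ((G.mem_neighborFinset v k).1 hkN)) with h' | h'
        · exact h'
        · exact absurd h' h.2
    have c3 : ∀ k ∈ G.neighborFinset v, k ∉ A →
        (X (k, v) : MvPolynomial (Fin n × Fin n) K) ∈ p := by
      intro k hkN hkA
      rw [hAdef, Finset.mem_filter] at hkA
      push_neg at hkA
      obtain ⟨h1, h2⟩ := hkA hkN
      have hadj' := (G.mem_neighborFinset v k).1 hkN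
      rcases lt_or_gt_of_ne hadj'.ne with h | h
      · exact h2 h
      · rcases hp.mem_or_mem (c1 k hadj') with h' | h'
        · exact absurd h' (h1 h)
        · exact h'
    refine ⟨hAsub, ?_⟩
    rw [PIA, Ideal.span_le]
    rintro f (⟨q, hVv, rfl⟩ | ⟨a', b', hab', hlt', rfl⟩)
    · rcases hVv with ⟨h1, h2⟩ | ⟨h1, h2⟩ | ⟨h1, h2, h3⟩
      · have : q = (v, v) := Prod.ext h1 h2
        rw [this]; exact hvv
      · have : q = (v, q.2) := Prod.ext h1 rfl
        rw [this]; exact c2 q.2 h2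
      · have : q = (q.1, v) := Prod.ext rfl h1
        rw [this]; exact c3 q.1 h2 h3
    · exact hdiag (Ideal.subset_span ⟨a', b', hab'.1, hlt', rfl⟩)
  rcases hp.mem_or_mem hdiagmem with hvmem | hvmem
  · -- X (a,a) ∈ p; vertex a, partner b with a < b and X (b,a) ∈ p
    obtain ⟨hAsub, hle⟩ := main a hvmem _ rfl
    refine ⟨a, _, hAsub, ?_, hle⟩
    refine ⟨b, (G.mem_neighborFinset a b).2 hadj, Or.inr ⟨hlt, ?_⟩⟩
    rw [Finset.mem_filter]
    rintro ⟨-, ⟨h1, -⟩ | ⟨-, h2⟩⟩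
    · exact absurd hlt (not_lt.2 h1.le)
    · exact h2 hXq
  · -- X (b,b) ∈ p; vertex b, partner a with a < b and X (b,a) ∈ p
    obtain ⟨hAsub, hle⟩ := main b hvmem _ rfl
    refine ⟨b, _, hAsub, ?_, hle⟩
    refine ⟨a, (G.mem_neighborFinset b a).2 hadj.symm, Or.inl ⟨hlt, ?_⟩⟩
    rw [Finset.mem_filter]
    exact ⟨(G.mem_neighborFinset b a).2 hadj.symm, Or.inl ⟨hlt, hXq⟩⟩

lemma PIA_not_le {i j : Fin n} {A B : Finset (Fin n)} (hA : A ⊆ G.neighborFinset i)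
    (hB : B ⊆ G.neighborFinset j) (hne : (i, A) ≠ (j, B)) :
    ¬ PIA G K i A ≤ PIA G K j B := by
  classical
  have key : ∃ q, Vvar G i A q ∧ ¬ Vvar G j B q := by
    by_cases hij : i = j
    · subst hij
      have hAB : A ≠ B := fun h => hne (by rw [h])
      have : ∃ k, (k ∈ A ∧ k ∉ B) ∨ (k ∈ B ∧ k ∉ A) := by
        by_contra hcon
        push_neg at hcon
        exact hAB (Finset.ext fun k => ⟨fun hk => (hcon k).1 hk, fun hk => (hcon k).2 hk⟩)
      obtain ⟨k, ⟨hkA, hkB⟩ | ⟨hkB, hkA⟩⟩ := this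
      · have hki : k ≠ i := fun h => G.loopless.irrefl i (h ▸ (G.mem_neighborFinset i k).1 (hA hkA))
        refine ⟨(i, k), Or.inr (Or.inl ⟨rfl, hkA⟩), ?_⟩
        rintro (⟨-, h2⟩ | ⟨-, h2⟩ | ⟨h1, -⟩)
        · exact hki h2
        · exact hkB h2
        · exact hki h1
      · have hki : k ≠ i := fun h => G.loopless.irrefl i (h ▸ (G.mem_neighborFinset i k).1 (hB hkB))
        refine ⟨(k, i), Or.inr (Or.inr ⟨rfl, hB hkB, hkA⟩), ?_⟩
        rintro (⟨h1, -⟩ | ⟨h1, -⟩ | ⟨-, -, h3⟩)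
        · exact hki h1
        · exact hki h1
        · exact h3 hkB
    · refine ⟨(i, i), Or.inl ⟨rfl, rfl⟩, ?_⟩
      rintro (⟨h1, -⟩ | ⟨h1, -⟩ | ⟨h1, -⟩) <;> exact hij h1
  obtain ⟨q, hq1, hq2⟩ := key
  intro hle
  exact X_not_mem_PIA G hq2 (hle (X_mem_PIA G hq1))

instance (i : Fin n) : DecidablePred (goodA G i) := fun A =>
  decidable_of_iff (∃ k ∈ G.neighborFinset i, (k < i ∧ k ∈ A) ∨ (i < k ∧ k ∉ A)) Iff.rfl

def idx : Finset (Fin n × Finset (Fin n)) :=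
  univ.biUnion (fun i => ((G.neighborFinset i).powerset.filter (goodA G i)).image
    (fun A => (i, A)))

lemma mem_idx {i : Fin n} {A : Finset (Fin n)} :
    (i, A) ∈ idx G ↔ A ⊆ G.neighborFinset i ∧ goodA G i A := by
  simp only [idx, Finset.mem_biUnion, Finset.mem_image, Finset.mem_filter,
    Finset.mem_powerset, mem_univ, true_and]
  constructor
  · rintro ⟨j, ⟨B, ⟨hB, hg⟩, heq⟩⟩
    obtain ⟨rfl, rfl⟩ : j = i ∧ B = A := by
      rw [Prod.ext_iff] at heq; exact ⟨heq.1, heq.2⟩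
    exact ⟨hB, hg⟩
  · rintro ⟨hA, hg⟩
    exact ⟨i, ⟨A, ⟨hA, hg⟩, rfl⟩⟩

lemma mp_eq : (QI G K).minimalPrimes =
    (fun z : Fin n × Finset (Fin n) => PIA G K z.1 z.2) '' ↑(idx G) := by
  ext p
  constructor
  · intro hp
    obtain ⟨⟨hprime, hQle⟩, hmin⟩ := hp
    obtain ⟨i, A, hA, hg, hle⟩ := exists_PIA_le G hprime hQle
    have hPIAQ : QI G K ≤ PIA G K i A := QI_le_PIA G hA hg
    have hple : p ≤ PIA G K i A := hmin ⟨PIA_isPrime G i A, hPIAQ⟩ hle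
    have : p = PIA G K i A := le_antisymm hple hle
    exact ⟨(i, A), Finset.mem_coe.2 ((mem_idx G).2 ⟨hA, hg⟩), this.symm⟩
  · intro hp
    obtain ⟨⟨i, A⟩, hz, rfl⟩ := hp
    obtain ⟨hA, hg⟩ := (mem_idx G).1 (Finset.mem_coe.1 hz)
    refine ⟨⟨PIA_isPrime G i A, QI_le_PIA G hA hg⟩, ?_⟩
    rintro q ⟨hqprime, hqQ⟩ hqle
    obtain ⟨j, B, hB, hgB, hleB⟩ := exists_PIA_le G hqprime hqQ
    by_cases heq : (j, B) = (i, A)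
    · obtain ⟨rfl, rfl⟩ : j = i ∧ B = A := by
        rw [Prod.ext_iff] at heq; exact ⟨heq.1, heq.2⟩
      exact hleB
    · exact absurd (hleB.trans hqle) (PIA_not_le G hB hA heq)

def Abad (i : Fin n) : Finset (Fin n) := (G.neighborFinset i).filter (fun k => i < k)

lemma good_iff {i : Fin n} {A : Finset (Fin n)} (hA : A ⊆ G.neighborFinset i) :
    goodA G i A ↔ A ≠ Abad G i := by
  constructor
  · rintro ⟨k, hk, hcase⟩ hEq
    subst hEq
    rcases hcase with ⟨hki, hkA⟩ | ⟨hik, hkA⟩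
    · rw [Abad, Finset.mem_filter] at hkA
      exact absurd hkA.2 (not_lt.2 hki.le)
    · exact hkA (by rw [Abad, Finset.mem_filter]; exact ⟨hk, hik⟩)
  · intro hne
    by_contra hg
    rw [goodA] at hg
    push_neg at hg
    refine hne (Finset.ext fun k => ?_)
    rw [Abad, Finset.mem_filter]
    constructor
    · intro hk
      have hkN := hA hk
      have h1 := hg k hkN
      have hki : k ≠ i := fun h =>
        G.loopless.irrefl i (h ▸ (G.mem_neighborFinset i k).1 hkN)
      refine ⟨hkN, ?_⟩
      rcases lt_or_gt_of_ne hki with h | h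
      · exact absurd hk (h1.1 h)
      · exact h
    · rintro ⟨hkN, hik⟩
      exact (hg k hkN).2 hik

lemma Abad_mem (i : Fin n) : Abad G i ∈ (G.neighborFinset i).powerset :=
  Finset.mem_powerset.2 (Finset.filter_subset _ _)

lemma inner_card (i : Fin n) :
    (((G.neighborFinset i).powerset.filter (goodA G i))).card = 2 ^ G.degree i - 1 := by
  classical
  have h1 : (G.neighborFinset i).powerset.filter (goodA G i) =
      (G.neighborFinset i).powerset.erase (Abad G i) := by
    rw [← Finset.filter_ne']
    refine Finset.filter_congr fun A hA => ?_
    exact ⟨fun h => (good_iff G (Finset.mem_powerset.1 hA)).1 h,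
      fun h => (good_iff G (Finset.mem_powerset.1 hA)).2 h⟩
  rw [h1, Finset.card_erase_of_mem (Abad_mem G i), Finset.card_powerset,
    G.card_neighborFinset_eq_degree]

lemma idx_card : (idx G).card = ∑ i : Fin n, (2 ^ G.degree i - 1) := by
  classical
  rw [idx, Finset.card_biUnion]
  · refine Finset.sum_congr rfl fun i _ => ?_
    rw [Finset.card_image_of_injective _ (fun A B h => by
      rw [Prod.ext_iff] at h; exact h.2), inner_card]
  · intro x _ y _ hxy
    rw [Function.onFun, Finset.disjoint_left]
    rintro z hz hz'
    rw [Finset.mem_image] at hz hz'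
    obtain ⟨A, -, rfl⟩ := hz
    obtain ⟨B, -, h⟩ := hz'
    rw [Prod.ext_iff] at h
    exact hxy h.1.symm

lemma ncard_mp : (QI G K).minimalPrimes.ncard = ∑ i : Fin n, (2 ^ G.degree i - 1) := by
  classical
  have hinj : Set.InjOn (fun z : Fin n × Finset (Fin n) => PIA G K z.1 z.2) ↑(idx G) := by
    intro z hz z' hz' heq
    by_contra hne
    obtain ⟨i, A⟩ := z
    obtain ⟨j, B⟩ := z'
    obtain ⟨hA, -⟩ := (mem_idx G).1 (Finset.mem_coe.1 hz)
    obtain ⟨hB, -⟩ := (mem_idx G).1 (Finset.mem_coe.1 hz')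
    exact PIA_not_le G hA hB hne (le_of_eq heq)
  rw [mp_eq, Set.ncard_image_of_injOn hinj, Set.ncard_coe_finset, idx_card G]

end

theorem stmt16 (K : Type*) [Field K] (n : ℕ) (G : SimpleGraph (Fin n))
    [DecidableRel G.Adj] (hiso : ∀ v : Fin n, 0 < G.degree v) :
    ((Ideal.span {Ideal.Quotient.mk (diagIdeal K n G)
          (∏ p ∈ Finset.univ.filter
              (fun p : Fin n × Fin n => G.Adj p.1 p.2 ∧ p.1 < p.2),
            X (p.2, p.1))}).minimalPrimes.ncard : ℤ) =
      (∑ i : Fin n, (2 : ℤ) ^ G.degree i) - n := by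
  classical
  have hYeq : (∏ p ∈ Finset.univ.filter
      (fun p : Fin n × Fin n => G.Adj p.1 p.2 ∧ p.1 < p.2),
      (X (p.2, p.1) : MvPolynomial (Fin n × Fin n) K)) = Yprod G K := rfl
  rw [hYeq]
  have hcomap : (Ideal.span {Ideal.Quotient.mk (diagIdeal K n G) (Yprod G K)}).comap
      (Ideal.Quotient.mk (diagIdeal K n G)) = QI G K := by
    have h1 : ({Ideal.Quotient.mk (diagIdeal K n G) (Yprod G K)} :
        Set (MvPolynomial (Fin n × Fin n) K ⧸ diagIdeal K n G)) =
        (Ideal.Quotient.mk (diagIdeal K n G)) '' {Yprod G K} := by simp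
    rw [h1, ← Ideal.map_span, Ideal.comap_map_of_surjective _ Ideal.Quotient.mk_surjective,
      ← RingHom.ker_eq_comap_bot, Ideal.mk_ker, QI, sup_comm]
  have hmp := Ideal.comap_minimalPrimes_eq_of_surjective
    (Ideal.Quotient.mk_surjective (I := diagIdeal K n G))
    (Ideal.span {Ideal.Quotient.mk (diagIdeal K n G) (Yprod G K)})
  rw [hcomap] at hmp
  have hinj : Function.Injective (Ideal.comap (Ideal.Quotient.mk (diagIdeal K n G)) :
      Ideal (MvPolynomial (Fin n × Fin n) K ⧸ diagIdeal K n G) →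
      Ideal (MvPolynomial (Fin n × Fin n) K)) :=
    Ideal.comap_injective_of_surjective _ Ideal.Quotient.mk_surjective
  have hcount : (Ideal.span {Ideal.Quotient.mk (diagIdeal K n G)
      (Yprod G K)}).minimalPrimes.ncard = ∑ i : Fin n, (2 ^ G.degree i - 1) := by
    rw [← ncard_mp (K := K) G, hmp, Set.ncard_image_of_injective _ hinj]
  rw [hcount, Nat.cast_sum]
  have hterm : ∀ i : Fin n, ((2 ^ G.degree i - 1 : ℕ) : ℤ) = 2 ^ G.degree i - 1 := by
    intro i
    have h1 : 1 ≤ 2 ^ G.degree i := Nat.one_le_two_pow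
    rw [Nat.cast_sub h1]
    push_cast
    ring
  rw [Finset.sum_congr rfl (fun i _ => hterm i), Finset.sum_sub_distrib,
    Finset.sum_const, Finset.card_univ, Fintype.card_fin]
  push_cast
  ring
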